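/- Let X be a metric space, μ an (a,b)-standard probability measure with supp(μ) = X, and X_k a sample of k points drawn i.i.d. from μ. Then for any η > 0, the probability that the Hausdorff distance d_H(X_k, X) exceeds 2η is at most (2^b / (a·η^b)) · exp(−k·a·η^b). -/

import Mathlib

open Metric MeasureTheory ProbabilityTheory
open scoped ENNReal

/-- `μ` is an `(a,b)`-standard measure with support the whole space: every open ball of radius
`r > 0` has mass at least `min 1 (a r^b)`. -/
def IsStandardMeasure {X : Type*} [MetricSpace X] [MeasurableSpace X] (μ : Measure X)
    (a b : ℝ) : Prop :=
  ∀ x : X, ∀ r : ℝ, 0 < r → ENNReal.ofReal (min 1 (a * r ^ b)) ≤ μ (ball x r)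

/-- Any `η`-separated finset has cardinality at most `2^b / (a η^b)`. -/
lemma separated_card_le {X : Type*} [MetricSpace X] [MeasurableSpace X] [BorelSpace X]
    (μ : Measure X) [IsProbabilityMeasure μ] (a b η : ℝ) (ha : 0 < a) (hb : 0 < b)
    (hη : 0 < η) (hstd : IsStandardMeasure μ a b) (h1 : a * η ^ b ≤ 1)
    (S : Finset X) (hsep : ∀ s ∈ S, ∀ t ∈ S, s ≠ t → η ≤ dist s t) :
    (S.card : ℝ) ≤ 2 ^ b / (a * η ^ b) := by
  have h2b : (0:ℝ) < 2 ^ b := Real.rpow_pos_of_pos (by norm_num) b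
  have hηb : (0:ℝ) < η ^ b := Real.rpow_pos_of_pos hη b
  set c : ℝ := a * (η / 2) ^ b with hc
  have hchalf : (η / 2) ^ b = η ^ b / 2 ^ b := Real.div_rpow hη.le (by norm_num : (0:ℝ) ≤ 2) b
  have hcpos : 0 < c := mul_pos ha (Real.rpow_pos_of_pos (by linarith) b)
  have hcle : c ≤ 1 := by
    have : (η / 2) ^ b ≤ η ^ b :=
      Real.rpow_le_rpow (by linarith) (by linarith) hb.le
    calc c ≤ a * η ^ b := by
            exact mul_le_mul_of_nonneg_left this ha.le
      _ ≤ 1 := h1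
  have hball : ∀ s : X, ENNReal.ofReal c ≤ μ (ball s (η / 2)) := by
    intro s
    have := hstd s (η / 2) (by linarith)
    rwa [min_eq_right hcle] at this
  have hdisj : (↑S : Set X).PairwiseDisjoint (fun s => ball s (η / 2)) := by
    intro s hs t ht hst
    apply Set.disjoint_left.2
    intro z hz hz'
    have h1 := hsep s hs t ht hst
    have := dist_triangle s z t
    rw [mem_ball, dist_comm] at hz
    rw [mem_ball, dist_comm] at hz'
    rw [dist_comm z t] at this
    linarith
  have hsum : (S.card : ℝ≥0∞) * ENNReal.ofReal c ≤ 1 := by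
    calc (S.card : ℝ≥0∞) * ENNReal.ofReal c
        = ∑ _s ∈ S, ENNReal.ofReal c := by rw [Finset.sum_const, nsmul_eq_mul]
      _ ≤ ∑ s ∈ S, μ (ball s (η / 2)) := Finset.sum_le_sum fun s _ => hball s
      _ = μ (⋃ s ∈ S, ball s (η / 2)) :=
          (measure_biUnion_finset hdisj fun s _ => measurableSet_ball).symm
      _ ≤ μ Set.univ := measure_mono (Set.subset_univ _)
      _ = 1 := measure_univ
  have hsum' : (S.card : ℝ) * c ≤ 1 := by
    have : ENNReal.ofReal ((S.card : ℝ) * c) ≤ ENNReal.ofReal 1 := by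
      rw [ENNReal.ofReal_mul (by positivity), ENNReal.ofReal_natCast, ENNReal.ofReal_one]
      exact hsum
    exact (ENNReal.ofReal_le_ofReal_iff one_pos.le).1 this
  have hcval : c * 2 ^ b = a * η ^ b := by
    rw [hc, hchalf]; field_simp
  have haηb : (0:ℝ) < a * η ^ b := mul_pos ha hηb
  rw [le_div_iff₀ haηb]
  calc (S.card : ℝ) * (a * η ^ b) = (S.card : ℝ) * c * 2 ^ b := by rw [← hcval]; ring
    _ ≤ 1 * 2 ^ b := mul_le_mul_of_nonneg_right hsum' h2b.le
    _ = 2 ^ b := one_mul _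

/-- Existence of a finite `η`-net of cardinality at most `2^b / (a η^b)`. -/
lemma exists_net {X : Type*} [MetricSpace X] [MeasurableSpace X] [BorelSpace X]
    (μ : Measure X) [IsProbabilityMeasure μ] (a b η : ℝ) (ha : 0 < a) (hb : 0 < b)
    (hη : 0 < η) (hstd : IsStandardMeasure μ a b) (h1 : a * η ^ b ≤ 1) :
    ∃ S : Finset X, (S.card : ℝ) ≤ 2 ^ b / (a * η ^ b) ∧
      ∀ x : X, ∃ s ∈ S, dist x s < η := by
  classical
  set P : ℕ → Prop := fun n => ∃ S : Finset X,
    (∀ s ∈ S, ∀ t ∈ S, s ≠ t → η ≤ dist s t) ∧ S.card = n with hP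
  set M : ℕ := Nat.floor (2 ^ b / (a * η ^ b)) with hM
  have hPM : ∀ n, P n → n ≤ M := by
    rintro n ⟨S, hsep, hcard⟩
    refine Nat.le_floor ?_
    rw [← hcard]
    exact separated_card_le μ a b η ha hb hη hstd h1 S hsep
  have hP0 : P 0 := ⟨∅, by simp⟩
  set n : ℕ := Nat.findGreatest P M with hn
  have hPn : P n := Nat.findGreatest_spec (Nat.zero_le M) hP0
  obtain ⟨S, hsep, hcard⟩ := hPn
  refine ⟨S, ?_, ?_⟩
  · exact separated_card_le μ a b η ha hb hη hstd h1 S hsep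
  · intro x
    by_contra h
    push_neg at h
    have hxS : x ∉ S := fun hx => by
      have := h x hx; simp at this; linarith
    have hsep' : ∀ s ∈ insert x S, ∀ t ∈ insert x S, s ≠ t → η ≤ dist s t := by
      intro s hs t ht hst
      rcases Finset.mem_insert.1 hs with hs' | hs'
      · rcases Finset.mem_insert.1 ht with ht' | ht'
        · exact absurd (hs'.trans ht'.symm) hst
        · subst hs'; exact h t ht'
      · rcases Finset.mem_insert.1 ht with ht' | ht'
        · subst ht'; rw [dist_comm]; exact h s hs'
        · exact hsep s hs' t ht' hst
    have hPn1 : P (n + 1) :=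
      ⟨insert x S, hsep', by rw [Finset.card_insert_of_notMem hxS, hcard]⟩
    have := Nat.le_findGreatest (hPM _ hPn1) hPn1
    omega

/-- Deviation bound for the Hausdorff distance of an i.i.d. sample (Cuevas–Rodríguez-Casal,
Chazal et al.): if `μ` is an `(a,b)`-standard probability measure with support `X` and
`X_k = (Z₁,…,Z_k)` is an i.i.d. `k`-sample from `μ`, then for any `η > 0`,
`ℙ(d_H(X_k, X) > 2η) ≤ (2^b/(a η^b)) · exp(−k a η^b)`. -/
theorem hausdorff_deviation_bound {X : Type*} [MetricSpace X] [MeasurableSpace X] [BorelSpace X]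
    {Ω : Type*} [MeasureSpace Ω] [IsProbabilityMeasure (ℙ : Measure Ω)]
    (μ : Measure X) [IsProbabilityMeasure μ] (a b : ℝ) (ha : 0 < a) (hb : 0 < b)
    (hstd : IsStandardMeasure μ a b) (k : ℕ) (Z : Fin k → Ω → X)
    (hmeas : ∀ i, Measurable (Z i))
    (hlaw : ∀ i, Measure.map (Z i) ℙ = μ)
    (hindep : iIndepFun Z ℙ)
    (η : ℝ) (hη : 0 < η) :
    ℙ {ω | 2 * η < hausdorffDist (Set.range fun i => Z i ω) (Set.univ : Set X)} ≤
      ENNReal.ofReal ((2 ^ b / (a * η ^ b)) * Real.exp (-(k * a * η ^ b))) := by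
  classical
  have h2b : (0:ℝ) < 2 ^ b := Real.rpow_pos_of_pos (by norm_num) b
  have hηb : (0:ℝ) < η ^ b := Real.rpow_pos_of_pos hη b
  have hRHS : (0:ℝ) ≤ (2 ^ b / (a * η ^ b)) * Real.exp (-(k * a * η ^ b)) := by positivity
  rcases Nat.eq_zero_or_pos k with hk | hk
  · subst hk
    have hempty : {ω : Ω | 2 * η <
        hausdorffDist (Set.range fun i : Fin 0 => Z i ω) (Set.univ : Set X)} = ∅ := by
      ext ω
      simp only [Set.mem_setOf_eq, Set.mem_empty_iff_false, iff_false, not_lt]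
      rw [Set.range_eq_empty, hausdorffDist_empty']
      linarith
    rw [hempty, measure_empty]
    exact zero_le
  by_cases h1 : a * η ^ b ≤ 1
  · -- main case
    obtain ⟨S, hScard, hSnet⟩ := exists_net μ a b η ha hb hη hstd h1
    have hsub : {ω : Ω | 2 * η <
        hausdorffDist (Set.range fun i => Z i ω) (Set.univ : Set X)} ⊆
        ⋃ s ∈ S, ⋂ j, Z j ⁻¹' (ball s η)ᶜ := by
      intro ω hω
      simp only [Set.mem_setOf_eq] at hω
      have hy : ∃ y : X, ∀ j, 2 * η < dist (Z j ω) y := by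
        by_contra h
        push_neg at h
        have hle : hausdorffDist (Set.range fun i => Z i ω) (Set.univ : Set X) ≤ 2 * η := by
          apply hausdorffDist_le_of_mem_dist (by linarith)
          · exact fun x _ => ⟨x, Set.mem_univ x, by rw [dist_self]; linarith⟩
          · intro y _
            obtain ⟨j, hj⟩ := h y
            exact ⟨Z j ω, ⟨j, rfl⟩, by rw [dist_comm]; exact hj⟩
        linarith
      obtain ⟨y, hy⟩ := hy
      obtain ⟨s, hsS, hys⟩ := hSnet y
      refine Set.mem_biUnion hsS ?_
      simp only [Set.mem_iInter, Set.mem_preimage, Set.mem_compl_iff, mem_ball, not_lt]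
      intro j
      have h2 := hy j
      have h3 : dist (Z j ω) y ≤ dist (Z j ω) s + dist s y := dist_triangle _ _ _
      rw [dist_comm s y] at h3
      linarith
    have hfactor : ∀ (j : Fin k) (s : X),
        ℙ (Z j ⁻¹' (ball s η)ᶜ) ≤ ENNReal.ofReal (Real.exp (-(a * η ^ b))) := by
      intro j s
      have hmap : ℙ (Z j ⁻¹' (ball s η)ᶜ) = μ (ball s η)ᶜ := by
        rw [← hlaw j, Measure.map_apply (hmeas j) measurableSet_ball.compl]
      rw [hmap, measure_compl measurableSet_ball (measure_ne_top _ _), measure_univ]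
      have hball : ENNReal.ofReal (a * η ^ b) ≤ μ (ball s η) := by
        have := hstd s η hη
        rwa [min_eq_right h1] at this
      calc (1 : ℝ≥0∞) - μ (ball s η) ≤ 1 - ENNReal.ofReal (a * η ^ b) :=
            tsub_le_tsub_left hball 1
        _ = ENNReal.ofReal (1 - a * η ^ b) := by
            rw [ENNReal.ofReal_sub 1 (by positivity), ENNReal.ofReal_one]
        _ ≤ ENNReal.ofReal (Real.exp (-(a * η ^ b))) := by
            apply ENNReal.ofReal_le_ofReal
            have := Real.add_one_le_exp (-(a * η ^ b))
            linarith
    have hinter : ∀ s : X, ℙ (⋂ j, Z j ⁻¹' (ball s η)ᶜ) ≤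
        ENNReal.ofReal (Real.exp (-(k * a * η ^ b))) := by
      intro s
      have hEq : ℙ (⋂ j, Z j ⁻¹' (ball s η)ᶜ) =
          ∏ j : Fin k, ℙ (Z j ⁻¹' (ball s η)ᶜ) := by
        have h' := hindep.measure_inter_preimage_eq_mul Finset.univ
          (sets := fun _ => (ball s η)ᶜ) (fun i _ => measurableSet_ball.compl)
        simpa using h'
      rw [hEq]
      calc ∏ j : Fin k, ℙ (Z j ⁻¹' (ball s η)ᶜ)
          ≤ ∏ _j : Fin k, ENNReal.ofReal (Real.exp (-(a * η ^ b))) :=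
            Finset.prod_le_prod' fun j _ => hfactor j s
        _ = ENNReal.ofReal (Real.exp (-(a * η ^ b))) ^ k := by
            rw [Finset.prod_const, Finset.card_univ, Fintype.card_fin]
        _ = ENNReal.ofReal (Real.exp (-(a * η ^ b)) ^ k) := by
            rw [ENNReal.ofReal_pow (Real.exp_nonneg _)]
        _ = ENNReal.ofReal (Real.exp (-(k * a * η ^ b))) := by
            rw [← Real.exp_nat_mul]
            ring_nf
    calc ℙ {ω | 2 * η < hausdorffDist (Set.range fun i => Z i ω) (Set.univ : Set X)}
        ≤ ℙ (⋃ s ∈ S, ⋂ j, Z j ⁻¹' (ball s η)ᶜ) := measure_mono hsub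
      _ ≤ ∑ s ∈ S, ℙ (⋂ j, Z j ⁻¹' (ball s η)ᶜ) := measure_biUnion_finset_le S _
      _ ≤ ∑ _s ∈ S, ENNReal.ofReal (Real.exp (-(k * a * η ^ b))) :=
          Finset.sum_le_sum fun s _ => hinter s
      _ = (S.card : ℝ≥0∞) * ENNReal.ofReal (Real.exp (-(k * a * η ^ b))) := by
          rw [Finset.sum_const, nsmul_eq_mul]
      _ ≤ ENNReal.ofReal (2 ^ b / (a * η ^ b)) *
            ENNReal.ofReal (Real.exp (-(k * a * η ^ b))) := by
          apply mul_le_mul_left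
          rw [← ENNReal.ofReal_natCast]
          exact ENNReal.ofReal_le_ofReal hScard
      _ = ENNReal.ofReal ((2 ^ b / (a * η ^ b)) * Real.exp (-(k * a * η ^ b))) := by
          rw [← ENNReal.ofReal_mul (by positivity)]
  · -- degenerate case: every ball of radius η has full measure
    push_neg at h1
    have hfull : ∀ x : X, μ (ball x η) = 1 := by
      intro x
      refine le_antisymm prob_le_one ?_
      have := hstd x η hη
      rwa [min_eq_left h1.le, ENNReal.ofReal_one] at this
    have hcompl : ∀ x : X, μ (ball x η)ᶜ = 0 := by
      intro x
      rw [measure_compl measurableSet_ball (measure_ne_top _ _), measure_univ, hfull, tsub_self]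
    have hdiam : ∀ x y : X, dist x y < 2 * η := by
      intro x y
      have hnonempty : (ball x η ∩ ball y η).Nonempty := by
        rw [Set.nonempty_iff_ne_empty]
        intro hE
        have : μ (ball x η ∩ ball y η)ᶜ = 1 := by rw [hE, Set.compl_empty, measure_univ]
        have hle : μ (ball x η ∩ ball y η)ᶜ ≤ μ (ball x η)ᶜ + μ (ball y η)ᶜ := by
          rw [Set.compl_inter]
          exact measure_union_le _ _
        rw [this, hcompl, hcompl] at hle
        simp at hle
      obtain ⟨z, hzx, hzy⟩ := hnonempty
      rw [mem_ball, dist_comm] at hzx hzy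
      have := dist_triangle x z y
      rw [dist_comm z y] at this
      linarith
    have hempty : {ω : Ω | 2 * η <
        hausdorffDist (Set.range fun i => Z i ω) (Set.univ : Set X)} = ∅ := by
      ext ω
      simp only [Set.mem_setOf_eq, Set.mem_empty_iff_false, iff_false, not_lt]
      apply hausdorffDist_le_of_mem_dist (by linarith)
      · exact fun x _ => ⟨x, Set.mem_univ x, by rw [dist_self]; linarith⟩
      · intro y _
        exact ⟨Z ⟨0, hk⟩ ω, ⟨⟨0, hk⟩, rfl⟩, (hdiam y _).le⟩
    rw [hempty, measure_empty]
    exact zero_le
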